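/- Let A be a real symmetric n×n matrix such that A + Iₙ is positive definite, and let u(x) = ½⟨Ax, x⟩ on Ω = ℝⁿ. Then: (i) the π/4-rotated potential of u is the quadratic ū(x̄) = ½⟨Āx̄, x̄⟩ with Ā = (A − Iₙ)(A + Iₙ)^{-1}, and Ā is symmetric; (ii) Σᵢ₌₁ⁿ arctan λᵢ(Ā) = Σᵢ₌₁ⁿ arctan λᵢ(A) − nπ/4; (iii) if moreover A is positive semidefinite, then −Iₙ ≤ Ā < Iₙ, i.e. all eigenvalues of Ā lie in [−1, 1). -/

import Mathlib

open Set Metric MeasureTheory Filter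
open scoped Topology NNReal RealInnerProductSpace

noncomputable section

abbrev Euc (n : ℕ) := EuclideanSpace ℝ (Fin n)

/-- `F(A) = ∑ arctan λᵢ(A)` for a symmetric matrix `A` (junk value `0` otherwise). -/
noncomputable def lagrangianAngle (n : ℕ) (A : Matrix (Fin n) (Fin n) ℝ) : ℝ :=
  if hA : A.IsHermitian then ∑ i, Real.arctan (hA.eigenvalues i) else 0

/-- The Hessian matrix `D²u(x)` of `u` at `x`. -/
noncomputable def hessian (n : ℕ) (u : Euc n → ℝ) (x : Euc n) : Matrix (Fin n) (Fin n) ℝ :=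
  Matrix.of fun i j =>
    fderiv ℝ (fun y => fderiv ℝ u y (EuclideanSpace.single i 1)) x (EuclideanSpace.single j 1)

def ViscositySubsolution (n : ℕ) (Ω : Set (Euc n)) (u ψ : Euc n → ℝ) : Prop :=
  ∀ φ : Euc n → ℝ, ContDiff ℝ 2 φ → ∀ x₀ ∈ Ω,
    IsLocalMaxOn (fun x => u x - φ x) Ω x₀ → ψ x₀ ≤ lagrangianAngle n (hessian n φ x₀)

def ViscositySupersolution (n : ℕ) (Ω : Set (Euc n)) (u ψ : Euc n → ℝ) : Prop :=
  ∀ φ : Euc n → ℝ, ContDiff ℝ 2 φ → ∀ x₀ ∈ Ω,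
    IsLocalMinOn (fun x => u x - φ x) Ω x₀ → lagrangianAngle n (hessian n φ x₀) ≤ ψ x₀

def ViscositySolution (n : ℕ) (Ω : Set (Euc n)) (u ψ : Euc n → ℝ) : Prop :=
  ViscositySubsolution n Ω u ψ ∧ ViscositySupersolution n Ω u ψ

/-- `u ∈ C^{k,α}(Ω)`: `u` is `k` times continuously differentiable on `Ω` and `D^k u`
is locally `α`-Hölder continuous on `Ω`. -/
def IsCkHolderOn (n k : ℕ) (α : ℝ) (u : Euc n → ℝ) (Ω : Set (Euc n)) : Prop :=
  ContDiffOn ℝ k u Ω ∧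
  ∀ x ∈ Ω, ∃ U ∈ 𝓝[Ω] x, ∃ C : ℝ≥0,
    HolderOnWith C α.toNNReal (iteratedFDerivWithin ℝ k u Ω) U

/-- The subdifferential of `w` at `x`, relative to the domain `Ω`. -/
def subdiff (n : ℕ) (Ω : Set (Euc n)) (w : Euc n → ℝ) (x : Euc n) : Set (Euc n) :=
  {p | ∀ y ∈ Ω, w x + ⟪p, y - x⟫ ≤ w y}

/-- `∂w(Ω) = ⋃_{x ∈ Ω} ∂w(x)`. -/
def subdiffImage (n : ℕ) (Ω : Set (Euc n)) (w : Euc n → ℝ) : Set (Euc n) :=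
  ⋃ x ∈ Ω, subdiff n Ω w x

/-- `ũ(x) = s·u(x) + (c/2)|x|²` with `c = s = 1/√2`. -/
noncomputable def tildePot (n : ℕ) (u : Euc n → ℝ) : Euc n → ℝ :=
  fun x => (Real.sqrt 2)⁻¹ * u x + (2 * Real.sqrt 2)⁻¹ * ‖x‖ ^ 2

/-- The Legendre transform `f*(p) = sup_{x ∈ Ω} (⟨x, p⟩ − f(x))`. -/
noncomputable def legendreTransform (n : ℕ) (Ω : Set (Euc n)) (f : Euc n → ℝ) (p : Euc n) : ℝ :=
  sSup ((fun x => ⟪x, p⟫ - f x) '' Ω)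

/-- The π/4-rotated potential `ū`, defined by `s·ū(p) − (c/2)|p|² = −ũ*(p)`. -/
noncomputable def rotPotential (n : ℕ) (Ω : Set (Euc n)) (u : Euc n → ℝ) : Euc n → ℝ :=
  fun p => Real.sqrt 2 *
    ((2 * Real.sqrt 2)⁻¹ * ‖p‖ ^ 2 - legendreTransform n Ω (tildePot n u) p)

/-- The VMO modulus `ω(r)` of `v` on `Ω`. -/
noncomputable def vmoModulus (n : ℕ) (Ω : Set (Euc n)) (v : Euc n → ℝ) (r : ℝ) : ℝ :=
  ⨆ x₀ ∈ Ω, ⨆ ρ ∈ Set.Ioc (0:ℝ) r,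
    ⨍ x in Metric.ball x₀ ρ ∩ Ω, |v x - ⨍ y in Metric.ball x₀ ρ ∩ Ω, v y|

/-- `v ∈ VMO(Ω)`: the VMO modulus tends to `0` as `r → 0⁺`. -/
def IsVMO (n : ℕ) (Ω : Set (Euc n)) (v : Euc n → ℝ) : Prop :=
  Tendsto (vmoModulus n Ω v) (𝓝[>] (0:ℝ)) (𝓝 0)

end

open scoped Matrix

open Polynomial in
lemma aux_charpoly_diagonal {n : ℕ} (d : Fin n → ℝ) :
    (Matrix.diagonal d).charpoly = ∏ i, (X - C (d i)) := by
  have h : Matrix.charmatrix (Matrix.diagonal d)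
      = Matrix.diagonal (fun i => X - C (d i)) := by
    ext i j
    by_cases hij : i = j
    · subst hij; simp [Matrix.charmatrix_apply_eq]
    · simp [Matrix.charmatrix_apply_ne _ _ _ hij, Matrix.diagonal_apply_ne _ hij]
  rw [Matrix.charpoly, h, Matrix.det_diagonal]

open Polynomial in
lemma aux_charpoly_conj {n : ℕ} (U : Matrix.unitaryGroup (Fin n) ℝ)
    (N : Matrix (Fin n) (Fin n) ℝ) :
    ((U : Matrix (Fin n) (Fin n) ℝ) * N * star (U : Matrix (Fin n) (Fin n) ℝ)).charpoly
      = N.charpoly := by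
  set V : Matrix (Fin n) (Fin n) ℝ := (U : Matrix (Fin n) (Fin n) ℝ)
  have hUV : V * star V = 1 := Matrix.mem_unitaryGroup_iff.mp U.2
  have key : Matrix.charmatrix (V * N * star V)
      = V.map C * Matrix.charmatrix N * (star V).map C := by
    rw [Matrix.charmatrix, Matrix.charmatrix]
    rw [Matrix.mul_sub, Matrix.sub_mul]
    congr 1
    · -- V.map C * scalar X * (star V).map C = scalar X
      have : (Matrix.scalar (Fin n) (X : ℝ[X])) = (X : ℝ[X]) • (1 : Matrix (Fin n) (Fin n) ℝ[X]) := by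
        simp [Matrix.scalar_apply, Matrix.smul_eq_diagonal_mul]
      rw [this, Matrix.mul_smul, Matrix.smul_mul, Matrix.mul_one, ← Matrix.map_mul, hUV]
      simp
    · simp only [RingHom.mapMatrix_apply]
      rw [← Matrix.map_mul, ← Matrix.map_mul]
  rw [Matrix.charpoly, key, Matrix.det_mul, Matrix.det_mul, Matrix.charpoly]
  have : V.map C * (star V).map C = 1 := by rw [← Matrix.map_mul, hUV]; simp
  have hdet : (V.map C).det * ((star V).map C).det = 1 := by
    rw [← Matrix.det_mul, this, Matrix.det_one]
  calc (V.map C).det * (Matrix.charmatrix N).det * ((star V).map C).det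
      = (Matrix.charmatrix N).det * ((V.map C).det * ((star V).map C).det) := by ring
    _ = (Matrix.charmatrix N).det := by rw [hdet, mul_one]

open Polynomial in
lemma aux_sum_eigenvalues {n : ℕ} {M : Matrix (Fin n) (Fin n) ℝ} (hM : M.IsHermitian)
    (U : Matrix.unitaryGroup (Fin n) ℝ) (d : Fin n → ℝ)
    (h : M = (U : Matrix (Fin n) (Fin n) ℝ) * Matrix.diagonal d
      * star (U : Matrix (Fin n) (Fin n) ℝ)) (g : ℝ → ℝ) :
    ∑ i, g (hM.eigenvalues i) = ∑ i, g (d i) := by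
  have hof : (RCLike.ofReal ∘ hM.eigenvalues : Fin n → ℝ) = hM.eigenvalues := by
    funext i; simp
  have h1 : M.charpoly = ∏ i, (X - C (d i)) := by
    rw [h, aux_charpoly_conj, aux_charpoly_diagonal]
  have h2 : M.charpoly = ∏ i, (X - C (hM.eigenvalues i)) := by
    conv_lhs => rw [hM.spectral_theorem]
    rw [hof, Unitary.conjStarAlgAut_apply, aux_charpoly_conj, aux_charpoly_diagonal]
  have hroots : (Finset.univ.val.map hM.eigenvalues) = (Finset.univ.val.map d) := by
    have r1 : M.charpoly.roots = Finset.univ.val.map d := by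
      rw [h1]
      rw [show (∏ i, (X - C (d i))) = ((Finset.univ.val.map d).map (fun a => X - C a)).prod by
        rw [Multiset.map_map]; rfl]
      exact roots_multiset_prod_X_sub_C _
    have r2 : M.charpoly.roots = Finset.univ.val.map hM.eigenvalues := by
      rw [h2]
      rw [show (∏ i, (X - C (hM.eigenvalues i)))
          = ((Finset.univ.val.map hM.eigenvalues).map (fun a => X - C a)).prod by
        rw [Multiset.map_map]; rfl]
      exact roots_multiset_prod_X_sub_C _
    rw [← r1, ← r2]
  calc ∑ i, g (hM.eigenvalues i) = ((Finset.univ.val.map hM.eigenvalues).map g).sum := by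
        rw [Multiset.map_map]; rfl
    _ = ((Finset.univ.val.map d).map g).sum := by rw [hroots]
    _ = ∑ i, g (d i) := by rw [Multiset.map_map]; rfl

lemma aux_arctan_frac {l : ℝ} (h : -1 < l) :
    Real.arctan ((l - 1) / (l + 1)) = Real.arctan l - Real.pi / 4 := by
  have hl : 0 < l + 1 := by linarith
  have hf : (l - 1) / (l + 1) < 1 := by rw [div_lt_one hl]; linarith
  have key := Real.arctan_add (x := (l - 1) / (l + 1)) (y := 1) (by rwa [mul_one])
  rw [Real.arctan_one] at key
  have : ((l - 1) / (l + 1) + 1) / (1 - (l - 1) / (l + 1) * 1) = l := by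
    field_simp
    ring
  rw [this] at key
  linarith

lemma aux_quad_bound {n : ℕ} {M : Matrix (Fin n) (Fin n) ℝ} (hM : M.PosDef)
    (hMs : M.IsSymm) (P : Fin n → ℝ) :
    (∀ y : Fin n → ℝ, y ⬝ᵥ P - (1/2) * (y ⬝ᵥ (M *ᵥ y)) ≤ (1/2) * (P ⬝ᵥ (M⁻¹ *ᵥ P))) ∧
    ((M⁻¹ *ᵥ P) ⬝ᵥ P - (1/2) * ((M⁻¹ *ᵥ P) ⬝ᵥ (M *ᵥ (M⁻¹ *ᵥ P)))
      = (1/2) * (P ⬝ᵥ (M⁻¹ *ᵥ P))) := by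
  have hdet : IsUnit M.det := hM.det_pos.ne'.isUnit
  set w : Fin n → ℝ := M⁻¹ *ᵥ P with hw
  have hMw : M *ᵥ w = P := by
    rw [hw, Matrix.mulVec_mulVec, Matrix.mul_nonsing_inv _ hdet, Matrix.one_mulVec]
  have hcomm : ∀ y : Fin n → ℝ, w ⬝ᵥ (M *ᵥ y) = P ⬝ᵥ y := by
    intro y
    rw [Matrix.dotProduct_mulVec, ← Matrix.mulVec_transpose, hMs, hMw]
  have hwP : w ⬝ᵥ P = P ⬝ᵥ w := dotProduct_comm _ _
  constructor
  · intro y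
    have hz := hM.posSemidef.dotProduct_mulVec_nonneg (y - w)
    rw [star_trivial] at hz
    have expand : (y - w) ⬝ᵥ (M *ᵥ (y - w))
        = y ⬝ᵥ (M *ᵥ y) - y ⬝ᵥ P - P ⬝ᵥ y + P ⬝ᵥ w := by
      rw [Matrix.mulVec_sub, dotProduct_sub, sub_dotProduct,
        sub_dotProduct, hMw, hcomm y, hwP]
      ring
    rw [expand] at hz
    have hPy : P ⬝ᵥ y = y ⬝ᵥ P := dotProduct_comm _ _
    rw [hPy] at hz
    linarith
  · have h2 : w ⬝ᵥ (M *ᵥ w) = P ⬝ᵥ w := hcomm w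
    rw [h2, hwP]
    ring

lemma aux_dot_expand {n : ℕ} (M : Matrix (Fin n) (Fin n) ℝ) (y z : Fin n → ℝ) :
    y ⬝ᵥ (M *ᵥ z) = ∑ i, ∑ j, M i j * y i * z j := by
  simp only [dotProduct, Matrix.mulVec, Finset.mul_sum]
  exact Finset.sum_congr rfl fun i _ => Finset.sum_congr rfl fun j _ => by ring

lemma aux_inner {n : ℕ} (x p : Euc n) : ⟪x, p⟫ = (fun i => x i) ⬝ᵥ (fun i => p i) := by
  simp [PiLp.inner_apply, RCLike.inner_apply, dotProduct, mul_comm]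

lemma aux_norm {n : ℕ} (x : Euc n) : ‖x‖ ^ 2 = (fun i => x i) ⬝ᵥ (fun i => x i) := by
  rw [EuclideanSpace.norm_eq, Real.sq_sqrt (by positivity)]
  simp [dotProduct, sq_abs, sq]

lemma aux_part_i {n : ℕ} (A : Matrix (Fin n) (Fin n) ℝ)
    (hA_pos : (A + 1).PosDef) (hA1symm : (A + 1).IsSymm)
    (hAb : (A - 1) * (A + 1)⁻¹ = 1 - ((A + 1)⁻¹ + (A + 1)⁻¹)) (p : Euc n) :
    rotPotential n Set.univ (fun x => (1/2) * ∑ i, ∑ j, A i j * x i * x j) p =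
      (1/2) * ∑ i, ∑ j, ((A - 1) * (A + 1)⁻¹) i j * p i * p j := by
  have h2 : (0:ℝ) < Real.sqrt 2 := by positivity
  have h2s : Real.sqrt 2 * Real.sqrt 2 = 2 := Real.mul_self_sqrt (by norm_num)
  have hinv2 : Real.sqrt 2 * (Real.sqrt 2)⁻¹ = 1 := mul_inv_cancel₀ h2.ne'
  have hinv2' : (Real.sqrt 2)⁻¹ * Real.sqrt 2 = 1 := inv_mul_cancel₀ h2.ne'
  have h2inv : (2 * Real.sqrt 2)⁻¹ = (1/2) * (Real.sqrt 2)⁻¹ := by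
    rw [mul_inv]; ring
  set u : Euc n → ℝ := fun x => (1/2) * ∑ i, ∑ j, A i j * x i * x j with hu
  set N : Matrix (Fin n) (Fin n) ℝ := (A + 1)⁻¹ with hN
  obtain ⟨hbound, hattain⟩ := aux_quad_bound hA_pos hA1symm (Real.sqrt 2 • fun i => p i)
  have key : ∀ x : Euc n, ⟪x, p⟫ - tildePot n u x
      = (Real.sqrt 2)⁻¹ * ((fun i => x i) ⬝ᵥ (Real.sqrt 2 • fun i => p i)
          - (1/2) * ((fun i => x i) ⬝ᵥ ((A + 1) *ᵥ (fun i => x i)))) := by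
    intro x
    have e1 : ∑ i, ∑ j, A i j * x i * x j
        = (fun i => x i) ⬝ᵥ (A *ᵥ (fun i => x i)) := (aux_dot_expand A _ _).symm
    have e2 : (fun i => x i) ⬝ᵥ ((A + 1) *ᵥ (fun i => x i))
        = (fun i => x i) ⬝ᵥ (A *ᵥ (fun i => x i)) + (fun i => x i) ⬝ᵥ (fun i => x i) := by
      rw [Matrix.add_mulVec, Matrix.one_mulVec, dotProduct_add]
    have e3 : (fun i => x i) ⬝ᵥ (Real.sqrt 2 • fun i => p i)
        = Real.sqrt 2 * ((fun i => x i) ⬝ᵥ (fun i => p i)) := by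
      rw [dotProduct_smul, smul_eq_mul]
    rw [aux_inner x p]
    simp only [tildePot, hu]
    rw [aux_norm x, e1, e2, e3, h2inv]
    linear_combination (-((fun i => x i) ⬝ᵥ (fun i => p i))) * hinv2
  have heq : (1/2) * ((Real.sqrt 2 • fun i => p i) ⬝ᵥ (N *ᵥ (Real.sqrt 2 • fun i => p i)))
      = (fun i => p i) ⬝ᵥ (N *ᵥ (fun i => p i)) := by
    rw [Matrix.mulVec_smul, smul_dotProduct, dotProduct_smul,
      smul_eq_mul, smul_eq_mul]
    linear_combination ((1/2) * ((fun i => p i) ⬝ᵥ (N *ᵥ (fun i => p i)))) * h2s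
  have hgt : IsGreatest ((fun x => ⟪x, p⟫ - tildePot n u x) '' Set.univ)
      ((Real.sqrt 2)⁻¹ * ((fun i => p i) ⬝ᵥ (N *ᵥ (fun i => p i)))) := by
    constructor
    · refine ⟨(WithLp.equiv 2 (Fin n → ℝ)).symm (N *ᵥ (Real.sqrt 2 • fun i => p i)),
        Set.mem_univ _, ?_⟩
      dsimp only
      rw [key]
      have hcoe : (fun i => ((WithLp.equiv 2 (Fin n → ℝ)).symm
            (N *ᵥ (Real.sqrt 2 • fun i => p i))) i)
          = N *ᵥ (Real.sqrt 2 • fun i => p i) := rfl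
      rw [hcoe, hattain, heq]
    · rintro r ⟨x, -, rfl⟩
      dsimp only
      rw [key]
      calc (Real.sqrt 2)⁻¹ * ((fun i => x i) ⬝ᵥ (Real.sqrt 2 • fun i => p i)
            - (1/2) * ((fun i => x i) ⬝ᵥ ((A + 1) *ᵥ (fun i => x i))))
          ≤ (Real.sqrt 2)⁻¹ * ((1/2) * ((Real.sqrt 2 • fun i => p i)
              ⬝ᵥ (N *ᵥ (Real.sqrt 2 • fun i => p i)))) :=
            mul_le_mul_of_nonneg_left (hbound _) (by positivity)
        _ = (Real.sqrt 2)⁻¹ * ((fun i => p i) ⬝ᵥ (N *ᵥ (fun i => p i))) := by rw [heq]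
  have hsup : legendreTransform n Set.univ (tildePot n u) p
      = (Real.sqrt 2)⁻¹ * ((fun i => p i) ⬝ᵥ (N *ᵥ (fun i => p i))) := by
    simp only [legendreTransform]
    exact hgt.csSup_eq
  show Real.sqrt 2 * ((2 * Real.sqrt 2)⁻¹ * ‖p‖ ^ 2
      - legendreTransform n Set.univ (tildePot n u) p) = _
  rw [hsup, aux_norm p]
  have hRHS : ∑ i, ∑ j, ((A - 1) * (A + 1)⁻¹) i j * p i * p j
      = (fun i => p i) ⬝ᵥ (fun i => p i)
        - 2 * ((fun i => p i) ⬝ᵥ (N *ᵥ (fun i => p i))) := by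
    rw [hAb]
    have hent : ∀ i j, (1 - (N + N) : Matrix (Fin n) (Fin n) ℝ) i j
        = (1 : Matrix (Fin n) (Fin n) ℝ) i j - (N i j + N i j) := fun i j => rfl
    simp only [hent, sub_mul, add_mul, Finset.sum_sub_distrib, Finset.sum_add_distrib]
    have hone := aux_dot_expand (1 : Matrix (Fin n) (Fin n) ℝ) (fun i => p i) (fun i => p i)
    rw [Matrix.one_mulVec] at hone
    have hNs := aux_dot_expand N (fun i => p i) (fun i => p i)
    rw [← hone, ← hNs]
    ring
  rw [hRHS, h2inv]
  linear_combination ((1/2) * ((fun i => p i) ⬝ᵥ (fun i => p i))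
    - ((fun i => p i) ⬝ᵥ (N *ᵥ (fun i => p i)))) * hinv2

/-- the π/4-rotation of the quadratic `½⟨Ax,x⟩` (with `A + Iₙ` positive
definite) is the quadratic with symmetric matrix `Ā = (A − Iₙ)(A + Iₙ)⁻¹`; the Lagrangian
angle drops by `nπ/4`; and if `A` is positive semidefinite then `−Iₙ ≤ Ā < Iₙ`. -/
theorem rotation_of_quadratic
    (n : ℕ) (A : Matrix (Fin n) (Fin n) ℝ) (hA_symm : A.IsSymm)
    (hA_pos : (A + 1).PosDef) :
    (∀ p : Euc n,
      rotPotential n Set.univ (fun x => (1/2) * ∑ i, ∑ j, A i j * x i * x j) p =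
        (1/2) * ∑ i, ∑ j, ((A - 1) * (A + 1)⁻¹) i j * p i * p j) ∧
    ((A - 1) * (A + 1)⁻¹).IsSymm ∧
    lagrangianAngle n ((A - 1) * (A + 1)⁻¹) = lagrangianAngle n A - (n : ℝ) * Real.pi / 4 ∧
    (A.PosSemidef →
      ((A - 1) * (A + 1)⁻¹ + 1).PosSemidef ∧ (1 - (A - 1) * (A + 1)⁻¹).PosDef) := by
  have hdet : IsUnit (A + 1).det := hA_pos.det_pos.ne'.isUnit
  set N : Matrix (Fin n) (Fin n) ℝ := (A + 1)⁻¹ with hN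
  have hinv : (A + 1) * N = 1 := Matrix.mul_nonsing_inv _ hdet
  have hinv' : N * (A + 1) = 1 := Matrix.nonsing_inv_mul _ hdet
  have hAb : (A - 1) * (A + 1)⁻¹ = 1 - (N + N) := by
    have e : (A - 1) * N = (A + 1) * N - (N + N) := by noncomm_ring
    show (A - 1) * N = 1 - (N + N)
    rw [e, hinv]
  have hcommN : N * (A - 1) = (A - 1) * N := by
    have h2 : (A - 1) * (A + 1) = (A + 1) * (A - 1) := by noncomm_ring
    calc N * (A - 1) = N * (A - 1) * ((A + 1) * N) := by rw [hinv, mul_one]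
      _ = N * ((A - 1) * (A + 1)) * N := by noncomm_ring
      _ = N * ((A + 1) * (A - 1)) * N := by rw [h2]
      _ = (N * (A + 1)) * ((A - 1) * N) := by noncomm_ring
      _ = (A - 1) * N := by rw [hinv', one_mul]
  have hA1symm : (A + 1)ᵀ = A + 1 := by
    rw [Matrix.transpose_add, hA_symm.eq, Matrix.transpose_one]
  have hsymm : ((A - 1) * (A + 1)⁻¹).IsSymm := by
    show ((A - 1) * (A + 1)⁻¹)ᵀ = (A - 1) * (A + 1)⁻¹
    calc ((A - 1) * (A + 1)⁻¹)ᵀ = ((A + 1)⁻¹)ᵀ * (A - 1)ᵀ := Matrix.transpose_mul _ _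
      _ = N * (A - 1) := by
          rw [Matrix.transpose_nonsing_inv, hA1symm, Matrix.transpose_sub, hA_symm.eq,
            Matrix.transpose_one, ← hN]
      _ = (A - 1) * N := hcommN
      _ = (A - 1) * (A + 1)⁻¹ := by rw [hN]
  have hH : A.IsHermitian := by
    rw [Matrix.IsHermitian, Matrix.conjTranspose_eq_transpose_of_trivial]
    exact hA_symm.eq
  set lam : Fin n → ℝ := hH.eigenvalues with hlamdef
  set U := hH.eigenvectorUnitary with hUdef
  set V : Matrix (Fin n) (Fin n) ℝ := (U : Matrix (Fin n) (Fin n) ℝ) with hV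
  have hVsV : V * star V = 1 := Matrix.mem_unitaryGroup_iff.mp U.2
  have hsVV : star V * V = 1 := Matrix.mem_unitaryGroup_iff'.mp U.2
  have hspec : A = V * Matrix.diagonal lam * star V := by
    have h := hH.spectral_theorem
    have hof : (RCLike.ofReal ∘ hH.eigenvalues : Fin n → ℝ) = hH.eigenvalues := by
      funext i; simp
    rw [hof] at h
    exact h
  have hmul3 : ∀ d e : Fin n → ℝ,
      (V * Matrix.diagonal d * star V) * (V * Matrix.diagonal e * star V)
        = V * Matrix.diagonal (fun i => d i * e i) * star V := by
    intro d e
    have h1 : (V * Matrix.diagonal d * star V) * (V * Matrix.diagonal e * star V)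
        = V * (Matrix.diagonal d * (star V * V) * Matrix.diagonal e) * star V := by
      noncomm_ring
    rw [h1, hsVV, mul_one, Matrix.diagonal_mul_diagonal]
  have hone : V * Matrix.diagonal (fun _ => (1:ℝ)) * star V = 1 := by
    have : Matrix.diagonal (fun _ => (1:ℝ)) = (1 : Matrix (Fin n) (Fin n) ℝ) := Matrix.diagonal_one
    rw [this, mul_one, hVsV]
  have hconj_add : ∀ d e : Fin n → ℝ,
      V * Matrix.diagonal d * star V + V * Matrix.diagonal e * star V
        = V * Matrix.diagonal (fun i => d i + e i) * star V := by
    intro d e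
    have : Matrix.diagonal (fun i => d i + e i) = Matrix.diagonal d + Matrix.diagonal e := by
      rw [Matrix.diagonal_add]
    rw [this]
    noncomm_ring
  have hA1 : A + 1 = V * Matrix.diagonal (fun i => lam i + 1) * star V := by
    conv_lhs => rw [hspec, ← hone]
    rw [hconj_add]
  have hAm1 : A - 1 = V * Matrix.diagonal (fun i => lam i - 1) * star V := by
    have : A - 1 = A + (-1) := by rw [sub_eq_add_neg]
    rw [this]
    conv_lhs => rw [hspec]
    have hneg : (-1 : Matrix (Fin n) (Fin n) ℝ)
        = V * Matrix.diagonal (fun _ => (-1:ℝ)) * star V := by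
      have : Matrix.diagonal (fun _ => (-1:ℝ)) = -(1 : Matrix (Fin n) (Fin n) ℝ) := by
        rw [← Matrix.diagonal_one, ← Matrix.diagonal_neg]
      rw [this]
      simp only [Matrix.mul_neg, Matrix.neg_mul, mul_one, hVsV]
    rw [hneg, hconj_add]
    congr 1
  have hlampos : ∀ i, 0 < lam i + 1 := by
    intro i
    have hv := hH.mulVec_eigenvectorBasis i
    set v : Fin n → ℝ := ⇑(hH.eigenvectorBasis i) with hvdef
    have hv0 : v ≠ 0 := by
      intro h
      exact hH.eigenvectorBasis.orthonormal.ne_zero i (by ext j; exact congrFun h j)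
    have hpos := hA_pos.dotProduct_mulVec_pos hv0
    rw [star_trivial] at hpos
    have hvv : 0 < v ⬝ᵥ v := by
      have := Matrix.dotProduct_star_self_pos_iff (v := v) |>.mpr hv0
      rwa [star_trivial] at this
    rw [Matrix.add_mulVec, hv, Matrix.one_mulVec, dotProduct_add,
      dotProduct_smul] at hpos
    have : 0 < lam i * (v ⬝ᵥ v) + v ⬝ᵥ v := by simpa using hpos
    nlinarith
  have hNspec : N = V * Matrix.diagonal (fun i => (lam i + 1)⁻¹) * star V := by
    rw [hN]
    apply Matrix.inv_eq_right_inv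
    rw [hA1, hmul3]
    have : (fun i => (lam i + 1) * (lam i + 1)⁻¹) = fun _ => (1:ℝ) :=
      funext fun i => mul_inv_cancel₀ (hlampos i).ne'
    rw [this, hone]
  have hAbspec : (A - 1) * (A + 1)⁻¹
      = V * Matrix.diagonal (fun i => (lam i - 1) * (lam i + 1)⁻¹) * star V := by
    rw [hAm1, show (A + 1)⁻¹ = N from rfl, hNspec, hmul3]
  have hAbH : ((A - 1) * (A + 1)⁻¹).IsHermitian := by
    rw [Matrix.IsHermitian, Matrix.conjTranspose_eq_transpose_of_trivial]
    exact hsymm.eq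
  refine ⟨?_, hsymm, ?_, ?_⟩
  · intro p
    exact aux_part_i A hA_pos hA1symm hAb p
  · rw [lagrangianAngle, lagrangianAngle, dif_pos hAbH, dif_pos hH]
    rw [aux_sum_eigenvalues hAbH U _ hAbspec Real.arctan]
    have harc : ∀ i, Real.arctan ((lam i - 1) * (lam i + 1)⁻¹)
        = Real.arctan (lam i) - Real.pi / 4 := by
      intro i
      rw [← div_eq_mul_inv]
      exact aux_arctan_frac (by linarith [hlampos i])
    rw [Finset.sum_congr rfl (fun i _ => harc i), Finset.sum_sub_distrib,
      Finset.sum_const, Finset.card_univ, Fintype.card_fin, nsmul_eq_mul]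
    ring
  · intro hApsd
    have hlamnn : ∀ i, 0 ≤ lam i := fun i => hApsd.eigenvalues_nonneg i
    constructor
    · have h1 : (A - 1) * (A + 1)⁻¹ + 1
          = V * Matrix.diagonal (fun i => (lam i - 1) * (lam i + 1)⁻¹ + 1) * star V := by
        conv_lhs => rw [hAbspec, ← hone]
        rw [hconj_add]
      rw [h1]
      have hdnn : ∀ i, 0 ≤ (lam i - 1) * (lam i + 1)⁻¹ + 1 := by
        intro i
        have h1 := hlampos i
        have h2 := hlamnn i
        have h3 : 0 < (lam i + 1)⁻¹ := inv_pos.mpr h1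
        have h4 : (lam i + 1) * (lam i + 1)⁻¹ = 1 := mul_inv_cancel₀ h1.ne'
        nlinarith
      have hd := Matrix.posSemidef_diagonal_iff.mpr hdnn
      have h2 := hd.mul_mul_conjTranspose_same V
      rw [← Matrix.star_eq_conjTranspose] at h2
      exact h2
    · have h1Ab : 1 - (A - 1) * (A + 1)⁻¹ = N + N := by
        rw [hAb]; abel
      rw [h1Ab]
      exact Matrix.PosDef.add hA_pos.inv hA_pos.inv
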